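/- Let f(t) = Σ_{j=1}^n A_j e^{iλ_j t} with A_j ≠ 0 and λ_j rationally independent. Then f is Lipschitz, and for every γ > 0 there exists ε₀ > 0 such that every inclusion length L(ε) of the set of ε-almost periods of f satisfies L(ε) ≥ (1/ε)^{n-1-γ} for all ε ∈ (0, ε₀). -/

import Mathlib

open scoped BigOperators
open Complex Real

noncomputable section

lemma norm_expI_sub_one (θ : ℝ) :
    ‖Complex.exp (Complex.I * θ) - 1‖ = 2 * |Real.sin (θ / 2)| := by
  have h2 : ‖Complex.exp (Complex.I * θ) - 1‖ ^ 2 = 2 - 2 * Real.cos θ := by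
    have : Complex.exp (Complex.I * θ) - 1 =
        Complex.mk (Real.cos θ - 1) (Real.sin θ) := by
      rw [mul_comm]
      apply Complex.ext <;>
        simp [Complex.exp_ofReal_mul_I_re, Complex.exp_ofReal_mul_I_im]
    rw [this, Complex.sq_norm, Complex.normSq_mk]
    nlinarith [Real.sin_sq_add_cos_sq θ]
  have h3 : (2 * |Real.sin (θ / 2)|) ^ 2 = 2 - 2 * Real.cos θ := by
    have := Real.abs_sin_half θ
    rw [this, mul_pow, Real.sq_sqrt (by nlinarith [Real.cos_le_one θ])]
    ring
  have h4 : (0:ℝ) ≤ ‖Complex.exp (Complex.I * θ) - 1‖ := norm_nonneg _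
  have h5 : (0:ℝ) ≤ 2 * |Real.sin (θ / 2)| := by positivity
  nlinarith [h2, h3]

lemma norm_expI_sub_one_le (θ : ℝ) (k : ℤ) :
    ‖Complex.exp (Complex.I * θ) - 1‖ ≤ |θ - 2 * π * k| := by
  have hper : Complex.exp (Complex.I * θ) =
      Complex.exp (Complex.I * ((θ - 2 * π * k : ℝ) : ℂ)) := by
    rw [show (Complex.I * ((θ - 2 * π * k : ℝ) : ℂ)) = Complex.I * θ - k * (2 * π * Complex.I) by
      push_cast; ring, Complex.exp_sub, Complex.exp_int_mul_two_pi_mul_I]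
    simp
  rw [hper, norm_expI_sub_one]
  calc 2 * |Real.sin ((θ - 2 * π * k) / 2)| ≤ 2 * |(θ - 2 * π * k) / 2| := by
        have := Real.abs_sin_le_abs (x := (θ - 2 * π * k) / 2)
        linarith
    _ = |θ - 2 * π * k| := by rw [abs_div, (by norm_num : |(2:ℝ)| = 2)]; ring

lemma exists_near_int (θ : ℝ) :
    ∃ k : ℤ, |θ - 2 * π * k| ≤ (π / 2) * ‖Complex.exp (Complex.I * θ) - 1‖ := by
  refine ⟨round (θ / (2 * π)), ?_⟩
  set k : ℤ := round (θ / (2 * π))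
  have hπ := Real.pi_pos
  have hr : |θ - 2 * π * k| ≤ π := by
    have h1 : |θ / (2 * π) - k| ≤ 1 / 2 := abs_sub_round _
    have h2 : θ - 2 * π * k = (2 * π) * (θ / (2 * π) - k) := by
      field_simp
    rw [h2, abs_mul, abs_of_pos (by linarith)]
    nlinarith
  have hper : Complex.exp (Complex.I * θ) =
      Complex.exp (Complex.I * ((θ - 2 * π * k : ℝ) : ℂ)) := by
    rw [show (Complex.I * ((θ - 2 * π * k : ℝ) : ℂ)) = Complex.I * θ - k * (2 * π * Complex.I) by
      push_cast; ring, Complex.exp_sub, Complex.exp_int_mul_two_pi_mul_I]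
    simp
  rw [hper, norm_expI_sub_one]
  set r : ℝ := θ - 2 * π * k with hrdef
  have hj : 2 / π * |r / 2| ≤ |Real.sin (r / 2)| := by
    apply Real.mul_abs_le_abs_sin
    rw [abs_div, (by norm_num : |(2:ℝ)| = 2)]
    linarith
  have h6 : |r / 2| = |r| / 2 := by
    rw [abs_div, (by norm_num : |(2:ℝ)| = 2)]
  rw [h6] at hj
  have h7 : |r| / π ≤ |Real.sin (r / 2)| := by
    have : 2 / π * (|r| / 2) = |r| / π := by ring
    linarith [this ▸ hj]
  have h8 : |r| ≤ π * |Real.sin (r / 2)| := (div_le_iff₀' hπ).mp h7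
  nlinarith [abs_nonneg (Real.sin (r/2))]

lemma mean_bound {ι : Type*} [Fintype ι] [DecidableEq ι] (μ : ι → ℝ) (d : ι → ℂ) (T : ℝ)
    [DecidablePred fun k => μ k = 0] :
    ‖(∫ t in (0:ℝ)..T, ∑ k, d k * Complex.exp (Complex.I * ((μ k * t : ℝ) : ℂ))) -
        (T : ℂ) * ∑ k ∈ Finset.univ.filter (fun k => μ k = 0), d k‖ ≤
      ∑ k ∈ Finset.univ.filter (fun k => ¬ (μ k = 0)), ‖d k‖ * (2 / |μ k|) := by
  have hcont : ∀ k : ι, Continuous fun t : ℝ => d k * Complex.exp (Complex.I * ((μ k * t : ℝ) : ℂ)) := by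
    intro k
    fun_prop
  rw [intervalIntegral.integral_finset_sum (fun k _ => (hcont k).intervalIntegrable 0 T)]
  have h0 : ∀ k ∈ Finset.univ.filter (fun k => μ k = 0),
      (∫ t in (0:ℝ)..T, d k * Complex.exp (Complex.I * ((μ k * t : ℝ) : ℂ))) = (T:ℂ) * d k := by
    intro k hk
    rw [Finset.mem_filter] at hk
    simp only [hk.2]
    simp [mul_comm]
  have key : (∑ k, ∫ t in (0:ℝ)..T, d k * Complex.exp (Complex.I * ((μ k * t : ℝ) : ℂ))) =
      (T:ℂ) * (∑ k ∈ Finset.univ.filter (fun k => μ k = 0), d k) +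
      ∑ k ∈ Finset.univ.filter (fun k => ¬ (μ k = 0)),
        ∫ t in (0:ℝ)..T, d k * Complex.exp (Complex.I * ((μ k * t : ℝ) : ℂ)) := by
    rw [← Finset.sum_filter_add_sum_filter_not Finset.univ (fun k => μ k = 0)]
    rw [Finset.sum_congr rfl h0, ← Finset.mul_sum]
  rw [key, show ∀ x y : ℂ, x + y - x = y from fun x y => by ring]
  refine (norm_sum_le _ _).trans (Finset.sum_le_sum ?_)
  intro k hk
  rw [Finset.mem_filter] at hk
  have hμ : μ k ≠ 0 := hk.2
  have hrw : (fun t : ℝ => d k * Complex.exp (Complex.I * ((μ k * t : ℝ) : ℂ))) =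
      fun t : ℝ => d k * Complex.exp ((Complex.I * (μ k : ℂ)) * (t : ℂ)) := by
    funext t; push_cast; ring_nf
  rw [hrw, intervalIntegral.integral_const_mul, norm_mul]
  have hc : (Complex.I * (μ k : ℂ)) ≠ 0 := by
    simp [Complex.I_ne_zero, Complex.ofReal_eq_zero, hμ]
  rw [integral_exp_mul_complex hc]
  have hnum : ‖Complex.exp (Complex.I * (μ k : ℂ) * (T : ℂ)) -
      Complex.exp (Complex.I * (μ k : ℂ) * (0 : ℂ))‖ ≤ 2 := by
    refine (norm_sub_le _ _).trans ?_
    have e1 : ‖Complex.exp (Complex.I * (μ k : ℂ) * (T : ℂ))‖ = 1 := by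
      rw [Complex.norm_exp]
      simp
    have e2 : ‖Complex.exp (Complex.I * (μ k : ℂ) * (0 : ℂ))‖ = 1 := by
      simp
    rw [e1, e2]; norm_num
  rw [norm_div]
  have hden : ‖Complex.I * (μ k : ℂ)‖ = |μ k| := by
    rw [norm_mul, Complex.norm_I, Complex.norm_real, Real.norm_eq_abs,
      one_mul]
  rw [hden]
  have h2 : ‖Complex.exp (Complex.I * ↑(μ k) * ↑T) - Complex.exp (Complex.I * ↑(μ k) * 0)‖ / |μ k|
      ≤ 2 / |μ k| := by gcongr
  calc ‖d k‖ * (‖_ - _‖ / |μ k|) ≤ ‖d k‖ * (2 / |μ k|) :=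
    mul_le_mul_of_nonneg_left h2 (norm_nonneg _)

lemma int_rel {n : ℕ} {lam : Fin n → ℝ} (hlam : LinearIndependent ℚ lam)
    (c : Fin n → ℤ) (h : ∑ j, (c j : ℝ) * lam j = 0) : ∀ j, c j = 0 := by
  intro j
  have := Fintype.linearIndependent_iff.mp hlam (fun j => (c j : ℚ)) ?_ j
  · exact_mod_cast this
  · rw [← h]
    apply Finset.sum_congr rfl
    intro i _
    rw [Rat.smul_def]
    push_cast
    ring
lemma kron {n : ℕ} (lam : Fin n → ℝ) (hlam : LinearIndependent ℚ lam)
    (x : Fin n → ℝ) {δ : ℝ} (hδ : 0 < δ) :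
    ∃ t : ℝ, ∀ j, ∃ k : ℤ, |lam j * t - x j - 2 * π * k| ≤ δ := by
  classical
  by_contra hcon
  push_neg at hcon
  have hπ := Real.pi_pos
  set Λ : Option (Fin n) → ℝ := fun o => Option.elim o 0 lam with hΛdef
  set X : Option (Fin n) → ℝ := fun o => Option.elim o 0 x with hXdef
  set g : Option (Fin n) → ℝ → ℂ :=
    fun o t => Complex.exp (Complex.I * ((Λ o * t - X o : ℝ) : ℂ)) with hgdef
  set F : ℝ → ℂ := fun t => ∑ o, g o t with hFdef
  have hgnorm : ∀ (o : Option (Fin n)) (t : ℝ), ‖g o t‖ = 1 := by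
    intro o t
    rw [hgdef]
    simp [Complex.norm_exp, Complex.mul_re]
  have hgnone : ∀ t : ℝ, g none t = 1 := by
    intro t
    rw [hgdef]
    simp [hΛdef, hXdef]
  set ρ : ℝ := min (2 / π * δ) 1 with hρdef
  have hρpos : 0 < ρ := lt_min (by positivity) one_pos
  have hρ1 : ρ ≤ 1 := min_le_right _ _
  set η : ℝ := ρ ^ 2 / 4 with hηdef
  have hηpos : 0 < η := by positivity
  have hη1 : η ≤ 1 / 4 := by
    rw [hηdef]
    nlinarith
  -- pointwise bound on ‖F‖
  have hFb : ∀ t : ℝ, ‖F t‖ ≤ (n : ℝ) + 1 - η := by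
    intro t
    obtain ⟨j, hj⟩ := hcon t
    have hn1 : 0 < n := j.pos
    set z : ℂ := g (some j) t with hzdef
    have hznorm : ‖z‖ = 1 := hgnorm (some j) t
    have hz1 : ρ ≤ ‖z - 1‖ := by
      obtain ⟨k, hk⟩ := exists_near_int (lam j * t - x j)
      have h1 := hj k
      have hz2 : z = Complex.exp (Complex.I * ((lam j * t - x j : ℝ) : ℂ)) := rfl
      by_contra hlt
      push_neg at hlt
      rw [hz2] at hlt
      have h3 : |lam j * t - x j - 2 * π * k| ≤ (π / 2) * ‖Complex.exp (Complex.I * ((lam j * t - x j : ℝ) : ℂ)) - 1‖ := hk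
      have h4 : ρ ≤ 2 / π * δ := min_le_left _ _
      have h5 : (π / 2) * ‖Complex.exp (Complex.I * ((lam j * t - x j : ℝ) : ℂ)) - 1‖ <
          (π / 2) * (2 / π * δ) := by
        apply mul_lt_mul_of_pos_left (lt_of_lt_of_le hlt h4) (by positivity)
      have h6 : (π / 2) * (2 / π * δ) = δ := by field_simp
      linarith
    have h1z : ‖1 + z‖ ≤ 2 - η := by
      have hpar := parallelogram_law_with_norm ℝ (1 : ℂ) z
      have h7 : ‖(1 : ℂ)‖ = 1 := by simp
      have h8 : ‖(1 : ℂ) - z‖ = ‖z - 1‖ := norm_sub_rev _ _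
      rw [h7, h8, hznorm] at hpar
      have h9 : 0 ≤ ‖1 + z‖ := norm_nonneg _
      have h10 : 2 - η ≥ 0 := by linarith
      nlinarith [hz1, hρpos, hρ1]
    have e1 : (∑ o, g o t) = g none t + ∑ o ∈ Finset.univ.erase none, g o t :=
      (Finset.add_sum_erase _ _ (Finset.mem_univ none)).symm
    have hjmem : (some j) ∈ (Finset.univ : Finset (Option (Fin n))).erase none := by simp
    have e2 : (∑ o ∈ Finset.univ.erase none, g o t)
        = g (some j) t + ∑ o ∈ (Finset.univ.erase none).erase (some j), g o t :=
      (Finset.add_sum_erase _ _ hjmem).symm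
    have hcard : (((Finset.univ : Finset (Option (Fin n))).erase none).erase (some j)).card
        = n - 1 := by
      rw [Finset.card_erase_of_mem hjmem, Finset.card_erase_of_mem (Finset.mem_univ none)]
      simp
    have hrest : ‖∑ o ∈ (Finset.univ.erase none).erase (some j), g o t‖ ≤ (n : ℝ) - 1 := by
      refine (norm_sum_le _ _).trans ?_
      have : ∀ o ∈ ((Finset.univ : Finset (Option (Fin n))).erase none).erase (some j),
          ‖g o t‖ = 1 := fun o _ => hgnorm o t
      rw [Finset.sum_congr rfl this, Finset.sum_const, nsmul_eq_mul, mul_one, hcard]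
      rw [Nat.cast_sub hn1]
      simp
    have : F t = (1 + z) + ∑ o ∈ (Finset.univ.erase none).erase (some j), g o t := by
      rw [hFdef]
      simp only
      rw [e1, e2, hgnone, ← hzdef, add_assoc]
    rw [this]
    calc ‖(1 + z) + _‖ ≤ ‖1 + z‖ + ‖∑ o ∈ (Finset.univ.erase none).erase (some j), g o t‖ :=
          norm_add_le _ _
      _ ≤ (2 - η) + ((n : ℝ) - 1) := add_le_add h1z hrest
      _ = (n : ℝ) + 1 - η := by ring
  -- choice of exponent k
  have hηn : 0 < (n : ℝ) + 1 - η := by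
    have : (0:ℝ) ≤ n := Nat.cast_nonneg n
    linarith
  set r : ℝ := (((n : ℝ) + 1) / ((n : ℝ) + 1 - η)) ^ 2 with hrdef
  have hq1 : 1 < ((n : ℝ) + 1) / ((n : ℝ) + 1 - η) := (one_lt_div hηn).mpr (by linarith)
  have hr1 : 1 < r := by
    rw [hrdef]
    nlinarith
  have hr0 : 0 < r := lt_trans one_pos hr1
  obtain ⟨K₀, hK₀⟩ := Filter.eventually_atTop.mp
    ((tendsto_pow_const_div_const_pow_of_one_lt (n + 1) hr1).eventually_lt_const
      (by positivity : (0:ℝ) < 1 / r))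
  set k : ℕ := max K₀ 1 with hkdef
  have hk1 : 1 ≤ k := le_max_right _ _
  have hkK : K₀ ≤ k + 1 := le_trans (le_max_left _ _) (Nat.le_succ _)
  have hk2 : (((k:ℝ) + 1)) ^ (n + 1) < r ^ k := by
    have h1 := hK₀ (k + 1) hkK
    have h2 : ((k + 1 : ℕ) : ℝ) ^ (n + 1) / r ^ (k + 1) < 1 / r := h1
    have h3 : (0:ℝ) < r ^ (k + 1) := by positivity
    rw [div_lt_div_iff₀ h3 hr0] at h2
    rw [one_mul, pow_succ] at h2
    push_cast at h2
    exact lt_of_mul_lt_mul_right h2 hr0.le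
  have hkey : (((k:ℝ) + 1)) ^ (n + 1) * ((n : ℝ) + 1 - η) ^ (2 * k) < ((n : ℝ) + 1) ^ (2 * k) := by
    have hrk : r ^ k = ((n : ℝ) + 1) ^ (2 * k) / ((n : ℝ) + 1 - η) ^ (2 * k) := by
      rw [hrdef, ← pow_mul, div_pow]
    have hB : (0:ℝ) < ((n : ℝ) + 1 - η) ^ (2 * k) := by positivity
    rw [hrk] at hk2
    calc (((k:ℝ) + 1)) ^ (n + 1) * ((n : ℝ) + 1 - η) ^ (2 * k)
        < (((n : ℝ) + 1) ^ (2 * k) / ((n : ℝ) + 1 - η) ^ (2 * k)) * ((n : ℝ) + 1 - η) ^ (2 * k) :=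
          mul_lt_mul_of_pos_right hk2 hB
      _ = ((n : ℝ) + 1) ^ (2 * k) := by field_simp
  -- counting setup
  set cnt : (Fin k → Option (Fin n)) → Option (Fin n) → ℕ :=
    fun σ o => (Finset.univ.filter (fun i => σ i = o)).card with hcntdef
  set SS : (Fin k → Option (Fin n)) → ℝ := fun σ => ∑ i, Λ (σ i) with hSSdef
  set PP : (Fin k → Option (Fin n)) → ℝ := fun σ => ∑ i, X (σ i) with hPPdef
  have hfib : ∀ (h : Option (Fin n) → ℝ) (σ : Fin k → Option (Fin n)),
      (∑ i, h (σ i)) = ∑ o : Option (Fin n), (cnt σ o : ℝ) * h o := by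
    intro h σ
    rw [← Finset.sum_fiberwise_of_maps_to (fun i _ => Finset.mem_univ (σ i)) (fun i => h (σ i))]
    apply Finset.sum_congr rfl
    intro o _
    have hco : ∀ i ∈ Finset.univ.filter (fun i => σ i = o), h (σ i) = h o := by
      intro i hi
      rw [Finset.mem_filter] at hi
      rw [hi.2]
    rw [Finset.sum_congr rfl hco, Finset.sum_const, nsmul_eq_mul]
  set μf : ((Fin k → Option (Fin n)) × (Fin k → Option (Fin n))) → ℝ :=
    fun p => SS p.1 - SS p.2 with hμfdef
  set df : ((Fin k → Option (Fin n)) × (Fin k → Option (Fin n))) → ℂ :=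
    fun p => Complex.exp (-Complex.I * ((PP p.1 - PP p.2 : ℝ) : ℂ)) with hdfdef
  -- pointwise expansion
  have hexp1 : ∀ (σ : Fin k → Option (Fin n)) (t : ℝ),
      (∏ i, g (σ i) t) = Complex.exp (Complex.I * ((SS σ * t - PP σ : ℝ) : ℂ)) := by
    intro σ t
    rw [hgdef]
    simp only
    rw [← Complex.exp_sum]
    congr 1
    rw [← Finset.mul_sum]
    congr 1
    rw [← Complex.ofReal_sum]
    congr 1
    rw [hSSdef, hPPdef]
    simp only
    rw [Finset.sum_sub_distrib, Finset.sum_mul]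
  have hFpow : ∀ t : ℝ,
      (∑ p : (Fin k → Option (Fin n)) × (Fin k → Option (Fin n)),
        df p * Complex.exp (Complex.I * ((μf p * t : ℝ) : ℂ)))
      = (((‖F t‖ ^ 2) ^ k : ℝ) : ℂ) := by
    intro t
    have h1 : F t ^ k = ∑ σ : Fin k → Option (Fin n),
        Complex.exp (Complex.I * ((SS σ * t - PP σ : ℝ) : ℂ)) := by
      have e0 : F t ^ k = ∏ _i : Fin k, F t := by
        rw [Finset.prod_const, Finset.card_univ, Fintype.card_fin]
      rw [e0, hFdef]
      simp only
      rw [Finset.prod_univ_sum]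
      rw [Fintype.piFinset_univ]
      exact Finset.sum_congr rfl fun σ _ => hexp1 σ t
    have h2 : (starRingEnd ℂ) (F t) ^ k = ∑ σ : Fin k → Option (Fin n),
        Complex.exp (-Complex.I * ((SS σ * t - PP σ : ℝ) : ℂ)) := by
      rw [← map_pow, h1, map_sum]
      apply Finset.sum_congr rfl
      intro σ _
      rw [← Complex.exp_conj]
      congr 1
      simp [Complex.conj_ofReal]
    have h3 : (((‖F t‖ ^ 2) ^ k : ℝ) : ℂ) = F t ^ k * (starRingEnd ℂ) (F t) ^ k := by
      rw [← mul_pow, Complex.mul_conj]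
      push_cast
      rw [Complex.normSq_eq_norm_sq]
      push_cast
      ring
    rw [h3, h1, h2, Finset.sum_mul_sum, Fintype.sum_prod_type]
    apply Finset.sum_congr rfl
    intro σ _
    apply Finset.sum_congr rfl
    intro σ' _
    rw [hdfdef, hμfdef]
    simp only
    rw [← Complex.exp_add, ← Complex.exp_add]
    congr 1
    push_cast
    ring
  -- the zero-frequency coefficient sum
  have hcnt_eq : ∀ p : (Fin k → Option (Fin n)) × (Fin k → Option (Fin n)),
      μf p = 0 → ∀ j : Fin n, cnt p.1 (some j) = cnt p.2 (some j) := by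
    intro p hp
    have h0 : SS p.1 = SS p.2 := by
      rw [hμfdef] at hp
      exact sub_eq_zero.mp hp
    rw [hSSdef] at h0
    simp only at h0
    rw [hfib Λ p.1, hfib Λ p.2] at h0
    rw [univ_option, Finset.sum_insertNone, Finset.sum_insertNone] at h0
    have hΛ0 : Λ none = 0 := rfl
    rw [hΛ0] at h0
    have h0' : ∑ j : Fin n, (((cnt p.1 (some j) : ℤ) - (cnt p.2 (some j) : ℤ) : ℤ) : ℝ) * lam j
        = 0 := by
      push_cast
      simp only [sub_mul]
      rw [Finset.sum_sub_distrib]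
      have e1 : ∑ j : Fin n, (cnt p.1 (some j) : ℝ) * lam j
          = ∑ j : Fin n, (cnt p.1 (some j) : ℝ) * Λ (some j) := rfl
      have e2 : ∑ j : Fin n, (cnt p.2 (some j) : ℝ) * lam j
          = ∑ j : Fin n, (cnt p.2 (some j) : ℝ) * Λ (some j) := rfl
      rw [e1, e2]
      simp only [mul_zero, zero_add] at h0
      linarith [h0]
    intro j
    have := int_rel hlam (fun j => (cnt p.1 (some j) : ℤ) - (cnt p.2 (some j) : ℤ)) h0' j
    omega
  have hd1 : ∀ p ∈ Finset.univ.filter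
      (fun p : (Fin k → Option (Fin n)) × (Fin k → Option (Fin n)) => μf p = 0), df p = 1 := by
    intro p hp
    rw [Finset.mem_filter] at hp
    have hc := hcnt_eq p hp.2
    have hP : PP p.1 = PP p.2 := by
      rw [hPPdef]
      simp only
      rw [hfib X p.1, hfib X p.2]
      rw [univ_option, Finset.sum_insertNone, Finset.sum_insertNone]
      have hX0 : X none = 0 := rfl
      rw [hX0]
      simp only [mul_zero, zero_add]
      exact Finset.sum_congr rfl fun j _ => by rw [hc j]
    rw [hdfdef]
    simp only
    rw [hP]
    simp
  -- the count Q and its lower bound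
  set Q : ℕ := (Finset.univ.filter
      (fun p : (Fin k → Option (Fin n)) × (Fin k → Option (Fin n)) => μf p = 0)).card with hQdef
  have hDsum : (∑ p ∈ Finset.univ.filter
      (fun p : (Fin k → Option (Fin n)) × (Fin k → Option (Fin n)) => μf p = 0), df p)
      = (Q : ℂ) := by
    rw [Finset.sum_congr rfl hd1, Finset.sum_const, nsmul_eq_mul, mul_one, hQdef]
  set e : (Fin k → Option (Fin n)) → (Option (Fin n) → Fin (k + 1)) :=
    fun σ o => ⟨cnt σ o, Nat.lt_succ_of_le (le_trans (Finset.card_filter_le _ _)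
      (le_of_eq (by simp)))⟩ with hedef
  have hQ1 : (Finset.univ.filter
      (fun p : (Fin k → Option (Fin n)) × (Fin k → Option (Fin n)) => e p.1 = e p.2)).card
      ≤ Q := by
    apply Finset.card_le_card
    intro p hp
    rw [Finset.mem_filter] at hp ⊢
    refine ⟨hp.1, ?_⟩
    have hcv : ∀ o, cnt p.1 o = cnt p.2 o := by
      intro o
      have := congrFun hp.2 o
      exact congrArg Fin.val this
    rw [hμfdef]
    simp only
    rw [hSSdef]
    simp only
    rw [hfib Λ p.1, hfib Λ p.2]
    rw [Finset.sum_congr rfl (fun o _ => by rw [hcv o] : ∀ o ∈ Finset.univ,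
      (cnt p.1 o : ℝ) * Λ o = (cnt p.2 o : ℝ) * Λ o)]
    exact sub_self _
  have hQ2 : (Finset.univ.filter
      (fun p : (Fin k → Option (Fin n)) × (Fin k → Option (Fin n)) => e p.1 = e p.2)).card
      = ∑ y : Option (Fin n) → Fin (k + 1),
          ((Finset.univ.filter (fun σ : Fin k → Option (Fin n) => e σ = y)).card) ^ 2 := by
    rw [Finset.card_eq_sum_card_fiberwise
      (f := fun p : (Fin k → Option (Fin n)) × (Fin k → Option (Fin n)) => e p.1)
      (t := Finset.univ) (fun p _ => Finset.mem_univ _)]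
    apply Finset.sum_congr rfl
    intro y _
    have hset : (Finset.univ.filter
        (fun p : (Fin k → Option (Fin n)) × (Fin k → Option (Fin n)) => e p.1 = e p.2)).filter
          (fun p => e p.1 = y)
        = (Finset.univ.filter (fun σ : Fin k → Option (Fin n) => e σ = y)) ×ˢ
          (Finset.univ.filter (fun σ : Fin k → Option (Fin n) => e σ = y)) := by
      ext p
      simp only [Finset.mem_filter, Finset.mem_product, Finset.mem_univ, true_and]
      constructor
      · rintro ⟨h1, h2⟩
        exact ⟨h2, h2 ▸ h1.symm ▸ h1 ▸ rfl⟩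
      · rintro ⟨h1, h2⟩
        exact ⟨h1.trans h2.symm, h1⟩
    rw [hset, Finset.card_product]
    ring
  have hQtot : (∑ y : Option (Fin n) → Fin (k + 1),
      ((Finset.univ.filter (fun σ : Fin k → Option (Fin n) => e σ = y)).card))
      = (n + 1) ^ k := by
    rw [← Finset.card_eq_sum_card_fiberwise (f := e) (t := Finset.univ)
      (fun σ _ => Finset.mem_univ _)]
    rw [Finset.card_univ, Fintype.card_fun]
    simp
  have hQ3 : ((n : ℝ) + 1) ^ (2 * k) ≤ (((k : ℝ) + 1)) ^ (n + 1) * (Q : ℝ) := by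
    have hcs := sq_sum_le_card_mul_sum_sq (s := (Finset.univ : Finset (Option (Fin n) → Fin (k + 1))))
      (f := fun y => (((Finset.univ.filter (fun σ : Fin k → Option (Fin n) => e σ = y)).card : ℝ)))
    have hcard_y : ((Finset.univ : Finset (Option (Fin n) → Fin (k + 1))).card : ℝ)
        = (((k : ℝ) + 1)) ^ (n + 1) := by
      rw [Finset.card_univ, Fintype.card_fun]
      push_cast
      simp
    have hsum1 : (∑ y : Option (Fin n) → Fin (k + 1),
        (((Finset.univ.filter (fun σ : Fin k → Option (Fin n) => e σ = y)).card : ℝ)))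
        = ((n : ℝ) + 1) ^ k := by
      rw [← Nat.cast_sum]
      rw [hQtot]
      push_cast
      ring
    have hsum2 : (∑ y : Option (Fin n) → Fin (k + 1),
        (((Finset.univ.filter (fun σ : Fin k → Option (Fin n) => e σ = y)).card : ℝ)) ^ 2)
        ≤ (Q : ℝ) := by
      have : (∑ y : Option (Fin n) → Fin (k + 1),
          (((Finset.univ.filter (fun σ : Fin k → Option (Fin n) => e σ = y)).card : ℝ)) ^ 2)
          = ((∑ y : Option (Fin n) → Fin (k + 1),
            ((Finset.univ.filter (fun σ : Fin k → Option (Fin n) => e σ = y)).card) ^ 2 : ℕ) : ℝ) := by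
        push_cast
        rfl
      rw [this, ← hQ2]
      exact_mod_cast hQ1
    calc ((n : ℝ) + 1) ^ (2 * k) = (((n : ℝ) + 1) ^ k) ^ 2 := by
          rw [← pow_mul, mul_comm k 2]
      _ = (∑ y : Option (Fin n) → Fin (k + 1),
            (((Finset.univ.filter (fun σ : Fin k → Option (Fin n) => e σ = y)).card : ℝ))) ^ 2 := by
          rw [hsum1]
      _ ≤ ((Finset.univ : Finset (Option (Fin n) → Fin (k + 1))).card : ℝ) *
            ∑ y : Option (Fin n) → Fin (k + 1),
              (((Finset.univ.filter (fun σ : Fin k → Option (Fin n) => e σ = y)).card : ℝ)) ^ 2 :=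
          hcs
      _ ≤ (((k : ℝ) + 1)) ^ (n + 1) * (Q : ℝ) := by
          rw [hcard_y]
          apply mul_le_mul_of_nonneg_left hsum2 (by positivity)
  have hQB : ((n : ℝ) + 1 - η) ^ (2 * k) < (Q : ℝ) := by
    have h1 : (((k : ℝ) + 1)) ^ (n + 1) * ((n : ℝ) + 1 - η) ^ (2 * k)
        < (((k : ℝ) + 1)) ^ (n + 1) * (Q : ℝ) := lt_of_lt_of_le hkey hQ3
    have h2 : (0:ℝ) < (((k : ℝ) + 1)) ^ (n + 1) := by positivity
    exact lt_of_mul_lt_mul_left h1 h2.le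
  -- setting up the integral contradiction
  set B : ℝ := ((n : ℝ) + 1 - η) ^ (2 * k) with hBdef
  set C : ℝ := ∑ p ∈ Finset.univ.filter
      (fun p : (Fin k → Option (Fin n)) × (Fin k → Option (Fin n)) => ¬ (μf p = 0)),
      ‖df p‖ * (2 / |μf p|) with hCdef
  have hC0 : 0 ≤ C := Finset.sum_nonneg fun p _ => by positivity
  set T : ℝ := (C + 1) / ((Q : ℝ) - B) with hTdef
  have hQBpos : 0 < (Q : ℝ) - B := by linarith
  have hT0 : 0 < T := by
    rw [hTdef]
    positivity
  have hFcont : Continuous F := by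
    rw [hFdef]
    apply continuous_finset_sum
    intro o _
    rw [hgdef]
    fun_prop
  have hIcont : Continuous fun t : ℝ => (‖F t‖ ^ 2) ^ k := by fun_prop
  have hupper : (∫ t in (0:ℝ)..T, (‖F t‖ ^ 2) ^ k) ≤ T * B := by
    have hptw : ∀ t ∈ Set.Icc (0:ℝ) T, (‖F t‖ ^ 2) ^ k ≤ B := by
      intro t _
      rw [hBdef, ← pow_mul]
      apply pow_le_pow_left₀ (by positivity)
      exact hFb t
    calc (∫ t in (0:ℝ)..T, (‖F t‖ ^ 2) ^ k) ≤ ∫ _t in (0:ℝ)..T, B :=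
          intervalIntegral.integral_mono_on hT0.le (hIcont.intervalIntegrable 0 T)
            intervalIntegrable_const hptw
      _ = T * B := by
          rw [intervalIntegral.integral_const, smul_eq_mul, sub_zero]
  have hlow : T * (Q : ℝ) - C ≤ ∫ t in (0:ℝ)..T, (‖F t‖ ^ 2) ^ k := by
    have hm := mean_bound μf df T
    have hintrw : (∫ t in (0:ℝ)..T, ∑ p : (Fin k → Option (Fin n)) × (Fin k → Option (Fin n)),
        df p * Complex.exp (Complex.I * ((μf p * t : ℝ) : ℂ)))
        = (((∫ t in (0:ℝ)..T, (‖F t‖ ^ 2) ^ k) : ℝ) : ℂ) := by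
      rw [← intervalIntegral.integral_ofReal]
      apply intervalIntegral.integral_congr
      intro t _
      exact hFpow t
    rw [hintrw, hDsum] at hm
    set Ir : ℝ := ∫ t in (0:ℝ)..T, (‖F t‖ ^ 2) ^ k with hIrdef
    have hcast : ((Ir : ℂ) - (T : ℂ) * (Q : ℂ)) = ((Ir - T * (Q : ℝ) : ℝ) : ℂ) := by
      push_cast
      ring
    rw [hcast] at hm
    rw [Complex.norm_real, Real.norm_eq_abs] at hm
    have h9 := (abs_le.mp hm).1
    linarith
  have hexpand : T * ((Q : ℝ) - B) = T * (Q : ℝ) - T * B := by ring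
  have hfinal : T * ((Q : ℝ) - B) ≤ C := by linarith
  have heq : T * ((Q : ℝ) - B) = C + 1 := by
    rw [hTdef, div_mul_cancel₀ _ (ne_of_gt hQBpos)]
  linarith
lemma coeff_bound {n : ℕ} (lam : Fin n → ℝ) (hinj : Function.Injective lam) (c : Fin n → ℂ)
    {s : ℝ} (hs : ∀ t : ℝ, ‖∑ j, c j * Complex.exp (Complex.I * ((lam j * t : ℝ) : ℂ))‖ ≤ s)
    (j : Fin n) : ‖c j‖ ≤ s := by
  classical
  set μ : Fin n → ℝ := fun k => lam k - lam j with hμdef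
  have hfil : Finset.univ.filter (fun k => μ k = 0) = {j} := by
    ext k
    simp [hμdef, sub_eq_zero, hinj.eq_iff]
  set C : ℝ := ∑ k ∈ Finset.univ.filter (fun k => ¬ (μ k = 0)), ‖c k‖ * (2 / |μ k|) with hCdef
  have hC0 : 0 ≤ C := Finset.sum_nonneg fun k _ => by positivity
  have key : ∀ T : ℝ, 0 < T → ‖c j‖ ≤ s + C / T := by
    intro T hT
    have hm := mean_bound μ c T
    rw [hfil, Finset.sum_singleton] at hm
    have hptw : ∀ t : ℝ, ‖∑ k, c k * Complex.exp (Complex.I * ((μ k * t : ℝ) : ℂ))‖ ≤ s := by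
      intro t
      have hrw : (∑ k, c k * Complex.exp (Complex.I * ((μ k * t : ℝ) : ℂ)))
          = Complex.exp (Complex.I * ((-(lam j * t) : ℝ) : ℂ)) *
            ∑ k, c k * Complex.exp (Complex.I * ((lam k * t : ℝ) : ℂ)) := by
        rw [Finset.mul_sum]
        apply Finset.sum_congr rfl
        intro k _
        rw [← mul_assoc, mul_comm (Complex.exp _) (c k), mul_assoc, ← Complex.exp_add]
        congr 2
        push_cast [hμdef]
        ring
      rw [hrw, norm_mul]
      have h1 : ‖Complex.exp (Complex.I * ((-(lam j * t) : ℝ) : ℂ))‖ = 1 := by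
        simp [Complex.norm_exp, Complex.mul_re]
      rw [h1, one_mul]
      exact hs t
    have hIb : ‖∫ t in (0:ℝ)..T, ∑ k, c k * Complex.exp (Complex.I * ((μ k * t : ℝ) : ℂ))‖
        ≤ s * T := by
      have := intervalIntegral.norm_integral_le_of_norm_le_const
        (C := s) (f := fun t => ∑ k, c k * Complex.exp (Complex.I * ((μ k * t : ℝ) : ℂ)))
        (a := 0) (b := T) (fun t _ => hptw t)
      calc ‖∫ t in (0:ℝ)..T, ∑ k, c k * Complex.exp (Complex.I * ((μ k * t : ℝ) : ℂ))‖
          ≤ s * |T - 0| := this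
        _ = s * T := by rw [sub_zero, abs_of_pos hT]
    have h2 : ‖(T:ℂ) * c j‖ = T * ‖c j‖ := by
      rw [norm_mul, Complex.norm_real, Real.norm_eq_abs, abs_of_pos hT]
    have h3 : (T:ℂ) * c j
        = (∫ t in (0:ℝ)..T, ∑ k, c k * Complex.exp (Complex.I * ((μ k * t : ℝ) : ℂ)))
          - ((∫ t in (0:ℝ)..T, ∑ k, c k * Complex.exp (Complex.I * ((μ k * t : ℝ) : ℂ)))
            - (T:ℂ) * c j) := by ring
    have h4 : T * ‖c j‖ ≤ s * T + C := by
      rw [← h2]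
      calc ‖(T:ℂ) * c j‖ = ‖_ - _‖ := by rw [← h3]
        _ ≤ ‖(∫ t in (0:ℝ)..T, ∑ k, c k * Complex.exp (Complex.I * ((μ k * t : ℝ) : ℂ)))‖ +
            ‖(∫ t in (0:ℝ)..T, ∑ k, c k * Complex.exp (Complex.I * ((μ k * t : ℝ) : ℂ)))
              - (T:ℂ) * c j‖ := norm_sub_le _ _
        _ ≤ s * T + C := add_le_add hIb hm
    have h5 : (s + C / T) * T = s * T + C := by field_simp
    have h6 : ‖c j‖ * T ≤ (s + C / T) * T := by
      rw [h5]
      linarith [h4]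
    exact le_of_mul_le_mul_right h6 hT
  by_contra hgt
  push_neg at hgt
  have hd : 0 < ‖c j‖ - s := by linarith
  set T : ℝ := (C + 1) / (‖c j‖ - s) with hTdef
  have hTpos : 0 < T := by positivity
  have hk := key T hTpos
  have h7 : C / T = C * (‖c j‖ - s) / (C + 1) := by
    rw [hTdef]
    field_simp
  have h8 : C * (‖c j‖ - s) / (C + 1) < ‖c j‖ - s := by
    rw [div_lt_iff₀ (by linarith : (0:ℝ) < C + 1)]
    nlinarith
  rw [h7] at hk
  linarith
set_option maxHeartbeats 1000000 in
/-- a quasiperiodic trigonometric polynomial with rationally independent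
exponents is Lipschitz, and for every γ > 0 there is ε₀ > 0 such that every inclusion
length L of its set of ε-almost periods satisfies L ≥ (1/ε)^{n-1-γ} for 0 < ε < ε₀. -/
theorem inclusion_length_lower_bound (n : ℕ) (hn : 0 < n) (A : Fin n → ℂ)
    (hA : ∀ j, A j ≠ 0) (lam : Fin n → ℝ) (hlam : LinearIndependent ℚ lam)
    (f : ℝ → ℂ)
    (hf : ∀ t : ℝ, f t = ∑ j, A j * Complex.exp (Complex.I * ((lam j * t : ℝ) : ℂ))) :
    (∃ K : NNReal, LipschitzWith K f) ∧
      ∀ γ > (0 : ℝ), ∃ ε₀ > (0 : ℝ), ∀ ε : ℝ, 0 < ε → ε < ε₀ → ∀ L : ℝ,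
        (∀ a : ℝ, ∃ τ ∈ Set.Icc a (a + L), (⨆ t : ℝ, ‖f (t + τ) - f t‖) < ε) →
        (1 / ε) ^ ((n : ℝ) - 1 - γ) ≤ L := by
  classical
  have hexpdiff : ∀ (l a b : ℝ),
      ‖Complex.exp (Complex.I * ((l * a : ℝ) : ℂ)) - Complex.exp (Complex.I * ((l * b : ℝ) : ℂ))‖
        ≤ |l| * |a - b| := by
    intro l a b
    have hfact : Complex.exp (Complex.I * ((l * a : ℝ) : ℂ))
        - Complex.exp (Complex.I * ((l * b : ℝ) : ℂ))
        = Complex.exp (Complex.I * ((l * b : ℝ) : ℂ)) *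
          (Complex.exp (Complex.I * ((l * (a - b) : ℝ) : ℂ)) - 1) := by
      rw [mul_sub, mul_one, ← Complex.exp_add]
      congr 2
      push_cast
      ring
    rw [hfact, norm_mul]
    have h1 : ‖Complex.exp (Complex.I * ((l * b : ℝ) : ℂ))‖ = 1 := by
      simp [Complex.norm_exp, Complex.mul_re]
    rw [h1, one_mul]
    have h2 := norm_expI_sub_one_le (l * (a - b)) 0
    simp only [Int.cast_zero, mul_zero, sub_zero] at h2
    calc ‖Complex.exp (Complex.I * ((l * (a - b) : ℝ) : ℂ)) - 1‖ ≤ |l * (a - b)| := h2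
      _ = |l| * |a - b| := abs_mul _ _
  constructor
  · -- Lipschitz part
    refine ⟨⟨∑ j, ‖A j‖ * |lam j|, by positivity⟩, ?_⟩
    apply LipschitzWith.of_dist_le_mul
    intro a b
    show dist (f a) (f b) ≤ (∑ j, ‖A j‖ * |lam j|) * dist a b
    rw [dist_eq_norm, hf a, hf b, ← Finset.sum_sub_distrib, Real.dist_eq]
    calc ‖∑ j, (A j * Complex.exp (Complex.I * ((lam j * a : ℝ) : ℂ))
            - A j * Complex.exp (Complex.I * ((lam j * b : ℝ) : ℂ)))‖
        ≤ ∑ j, ‖A j * Complex.exp (Complex.I * ((lam j * a : ℝ) : ℂ))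
            - A j * Complex.exp (Complex.I * ((lam j * b : ℝ) : ℂ))‖ := norm_sum_le _ _
      _ ≤ ∑ j, ‖A j‖ * |lam j| * |a - b| := by
          apply Finset.sum_le_sum
          intro j _
          rw [← mul_sub, norm_mul, mul_assoc]
          exact mul_le_mul_of_nonneg_left (hexpdiff (lam j) a b) (norm_nonneg _)
      _ = (∑ j, ‖A j‖ * |lam j|) * |a - b| := by rw [← Finset.sum_mul]
  · intro γ hγ
    have hne : Nonempty (Fin n) := ⟨⟨0, hn⟩⟩
    have huniv : (Finset.univ : Finset (Fin n)).Nonempty := Finset.univ_nonempty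
    have hπ := Real.pi_pos
    set Amin : ℝ := Finset.univ.inf' huniv (fun j => ‖A j‖) with hAmindef
    have hAminpos : 0 < Amin := by
      rw [hAmindef, Finset.lt_inf'_iff]
      intro j _
      exact norm_pos_iff.mpr (hA j)
    have hAminle : ∀ j, Amin ≤ ‖A j‖ := fun j => Finset.inf'_le _ (Finset.mem_univ j)
    set Lam : ℝ := Finset.univ.sup' huniv (fun j => |lam j|) with hLamdef
    have hLamge : ∀ j, |lam j| ≤ Lam := by
      intro j
      rw [hLamdef]
      exact Finset.le_sup' (fun j => |lam j|) (Finset.mem_univ j)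
    have hLampos : 0 < Lam := by
      have h1 : lam ⟨0, hn⟩ ≠ 0 := hlam.ne_zero ⟨0, hn⟩
      exact lt_of_lt_of_le (abs_pos.mpr h1) (hLamge ⟨0, hn⟩)
    set C₁ : ℝ := (π / (4 * Amin * Lam)) * (Amin / 3) ^ n with hC₁def
    have hC₁pos : 0 < C₁ := by positivity
    refine ⟨min (Amin / 12) (min 1 (C₁ ^ ((1:ℝ) / γ))), by positivity, ?_⟩
    intro ε hε hεlt L hL
    have hεA : ε < Amin / 12 := lt_of_lt_of_le hεlt (min_le_left _ _)
    have hε1 : ε < 1 := lt_of_lt_of_le hεlt (le_trans (min_le_right _ _) (min_le_left _ _))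
    have hεC : ε < C₁ ^ ((1:ℝ) / γ) :=
      lt_of_lt_of_le hεlt (le_trans (min_le_right _ _) (min_le_right _ _))
    set δ₁ : ℝ := (π / 2) * (ε / Amin) with hδ₁def
    have hδ₁pos : 0 < δ₁ := by positivity
    set hstep : ℝ := δ₁ / Lam with hstepdef
    have hsteppos : 0 < hstep := by positivity
    have hL0 : 0 ≤ L := by
      obtain ⟨τ₀, hτ₀, _⟩ := hL 0
      have h1 := hτ₀.1
      have h2 := hτ₀.2
      linarith
    -- Step 1 : almost periods are close to the frequency lattice
    have hap : ∀ τ : ℝ, (⨆ t : ℝ, ‖f (t + τ) - f t‖) < ε →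
        ∀ j : Fin n, ∃ k : ℤ, |lam j * τ - 2 * π * k| ≤ δ₁ := by
      intro τ hτ j
      set c : Fin n → ℂ :=
        fun j => A j * (Complex.exp (Complex.I * ((lam j * τ : ℝ) : ℂ)) - 1) with hcdef
      have hsum : ∀ t : ℝ, f (t + τ) - f t
          = ∑ j, c j * Complex.exp (Complex.I * ((lam j * t : ℝ) : ℂ)) := by
        intro t
        rw [hf (t + τ), hf t, ← Finset.sum_sub_distrib]
        apply Finset.sum_congr rfl
        intro j _
        have he : Complex.exp (Complex.I * ((lam j * (t + τ) : ℝ) : ℂ))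
            = Complex.exp (Complex.I * ((lam j * t : ℝ) : ℂ)) *
              Complex.exp (Complex.I * ((lam j * τ : ℝ) : ℂ)) := by
          rw [← Complex.exp_add]
          congr 1
          push_cast
          ring
        rw [hcdef]
        simp only
        rw [he]
        ring
      have hbdd : BddAbove (Set.range fun t => ‖f (t + τ) - f t‖) := by
        refine ⟨∑ j, ‖c j‖, ?_⟩
        rintro y ⟨t, rfl⟩
        simp only
        rw [hsum t]
        refine (norm_sum_le _ _).trans (Finset.sum_le_sum fun j _ => ?_)
        rw [norm_mul]
        have h1 : ‖Complex.exp (Complex.I * ((lam j * t : ℝ) : ℂ))‖ = 1 := by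
          simp [Complex.norm_exp, Complex.mul_re]
        rw [h1, mul_one]
      have hsle : ∀ t : ℝ, ‖f (t + τ) - f t‖ ≤ ⨆ t : ℝ, ‖f (t + τ) - f t‖ := by
        intro t
        exact le_ciSup hbdd t
      have hcb : ‖c j‖ ≤ ⨆ t : ℝ, ‖f (t + τ) - f t‖ := by
        apply coeff_bound lam hlam.injective c (fun t => ?_) j
        rw [← hsum t]
        exact hsle t
      have hcj : ‖c j‖ < ε := lt_of_le_of_lt hcb hτ
      have h1 : ‖c j‖ = ‖A j‖ * ‖Complex.exp (Complex.I * ((lam j * τ : ℝ) : ℂ)) - 1‖ := by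
        rw [hcdef]
        simp only
        rw [norm_mul]
      have h2 : ‖Complex.exp (Complex.I * ((lam j * τ : ℝ) : ℂ)) - 1‖ ≤ ε / Amin := by
        rw [le_div_iff₀ hAminpos]
        have h3 : Amin * ‖Complex.exp (Complex.I * ((lam j * τ : ℝ) : ℂ)) - 1‖
            ≤ ‖A j‖ * ‖Complex.exp (Complex.I * ((lam j * τ : ℝ) : ℂ)) - 1‖ :=
          mul_le_mul_of_nonneg_right (hAminle j) (norm_nonneg _)
        rw [← h1] at h3
        linarith [h3, hcj]
      obtain ⟨k, hk⟩ := exists_near_int (lam j * τ)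
      refine ⟨k, ?_⟩
      calc |lam j * τ - 2 * π * k|
          ≤ (π / 2) * ‖Complex.exp (Complex.I * ((lam j * τ : ℝ) : ℂ)) - 1‖ := hk
        _ ≤ (π / 2) * (ε / Amin) := mul_le_mul_of_nonneg_left h2 (by positivity)
        _ = δ₁ := by rw [hδ₁def]
    -- Step 2 : covering claim
    set N : ℕ := ⌈L / hstep⌉₊ with hNdef
    have hclaim : ∀ y : Fin n → ℝ, ∃ i : Fin (N + 1), ∀ j : Fin n, ∃ k : ℤ,
        |y j + ((i : ℝ) * hstep) * lam j - 2 * π * k| ≤ 3 * δ₁ := by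
      intro y
      obtain ⟨a, ha⟩ := kron lam hlam y hδ₁pos
      obtain ⟨τ, hτmem, hτap⟩ := hL a
      have hτ1 := hτmem.1
      have hτ2 := hτmem.2
      set sv : ℝ := τ - a with hsvdef
      have hsv0 : 0 ≤ sv := by rw [hsvdef]; linarith
      have hsvL : sv ≤ L := by rw [hsvdef]; linarith
      have hiN : ⌊sv / hstep⌋₊ < N + 1 := by
        have h1 : sv / hstep ≤ L / hstep := (div_le_div_iff_of_pos_right hsteppos).mpr hsvL
        have h2 : ⌊sv / hstep⌋₊ ≤ N := le_trans (Nat.floor_mono h1) (Nat.floor_le_ceil _)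
        omega
      refine ⟨⟨⌊sv / hstep⌋₊, hiN⟩, ?_⟩
      intro j
      obtain ⟨k₁, hk₁⟩ := ha j
      obtain ⟨k₂, hk₂⟩ := hap τ hτap j
      refine ⟨k₂ - k₁, ?_⟩
      have hfl1 : ((⌊sv / hstep⌋₊ : ℝ)) * hstep ≤ sv := by
        rw [← le_div_iff₀ hsteppos]
        exact Nat.floor_le (by positivity)
      have hfl2 : sv - ((⌊sv / hstep⌋₊ : ℝ)) * hstep ≤ hstep := by
        have := Nat.lt_floor_add_one (sv / hstep)
        rw [div_lt_iff₀ hsteppos] at this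
        nlinarith
      have hlamb : |lam j| * hstep ≤ δ₁ := by
        rw [hstepdef]
        calc |lam j| * (δ₁ / Lam) ≤ Lam * (δ₁ / Lam) :=
            mul_le_mul_of_nonneg_right (hLamge j) (by positivity)
          _ = δ₁ := by field_simp
      have hid : y j + ((⌊sv / hstep⌋₊ : ℝ) * hstep) * lam j - 2 * π * ((k₂ - k₁ : ℤ) : ℝ)
          = (lam j * τ - 2 * π * k₂) - (lam j * a - y j - 2 * π * k₁)
            - lam j * (sv - (⌊sv / hstep⌋₊ : ℝ) * hstep) := by
        rw [hsvdef]
        push_cast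
        ring
      have habs : |lam j * (sv - (⌊sv / hstep⌋₊ : ℝ) * hstep)| ≤ δ₁ := by
        rw [abs_mul]
        have h5 : |sv - (⌊sv / hstep⌋₊ : ℝ) * hstep| ≤ hstep := by
          rw [_root_.abs_of_nonneg (by linarith : (0:ℝ) ≤ sv - (⌊sv / hstep⌋₊ : ℝ) * hstep)]
          exact hfl2
        calc |lam j| * |sv - (⌊sv / hstep⌋₊ : ℝ) * hstep| ≤ |lam j| * hstep :=
            mul_le_mul_of_nonneg_left h5 (abs_nonneg _)
          _ ≤ δ₁ := hlamb
      rw [hid]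
      calc |(lam j * τ - 2 * π * k₂) - (lam j * a - y j - 2 * π * k₁)
            - lam j * (sv - (⌊sv / hstep⌋₊ : ℝ) * hstep)|
          ≤ |(lam j * τ - 2 * π * k₂) - (lam j * a - y j - 2 * π * k₁)|
            + |lam j * (sv - (⌊sv / hstep⌋₊ : ℝ) * hstep)| := abs_sub _ _
        _ ≤ (|lam j * τ - 2 * π * k₂| + |lam j * a - y j - 2 * π * k₁|) + δ₁ :=
            add_le_add (abs_sub _ _) habs
        _ ≤ (δ₁ + δ₁) + δ₁ := add_le_add (add_le_add hk₂ hk₁) le_rfl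
        _ = 3 * δ₁ := by ring
    -- Step 3 : grid counting
    set W : ℝ := 2 * Amin / (3 * ε) with hWdef
    have hWpos : 0 < W := by positivity
    have hW8 : 8 ≤ W := by
      rw [hWdef, le_div_iff₀ (by positivity)]
      nlinarith
    set M : ℕ := ⌈W⌉₊ - 1 with hMdef
    have hceil1 : 0 < ⌈W⌉₊ := Nat.ceil_pos.mpr hWpos
    have hMcast : (M : ℝ) = (⌈W⌉₊ : ℝ) - 1 := by
      rw [hMdef, Nat.cast_sub hceil1]
      simp
    have hMltW : (M : ℝ) < W := by
      have h1 := Nat.ceil_lt_add_one hWpos.le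
      rw [hMcast]
      linarith
    have hMgeW : W - 1 ≤ (M : ℝ) := by
      have h1 := Nat.le_ceil W
      rw [hMcast]
      linarith
    have hMge : Amin / (3 * ε) ≤ (M : ℝ) := by
      have h1 : W / 2 = Amin / (3 * ε) := by rw [hWdef]; ring
      linarith
    have hMRpos : (0:ℝ) < (M : ℝ) := by
      have : (0:ℝ) < Amin / (3 * ε) := by positivity
      linarith
    have h6δ : 6 * δ₁ < 2 * π / M := by
      have h2 : 2 * π / W = 6 * δ₁ := by
        rw [hWdef, hδ₁def]
        field_simp
        ring
      have h3 : 2 * π / W < 2 * π / M :=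
        div_lt_div_of_pos_left (by positivity) hMRpos hMltW
      linarith
    have hcount : M ^ n ≤ N + 1 := by
      choose iv hiv using fun v : Fin n → Fin M =>
        hclaim (fun j => 2 * π * ((v j : ℕ) : ℝ) / (M : ℝ))
      have hinj2 : Function.Injective iv := by
        intro v w hvw
        by_contra hne
        obtain ⟨j, hj⟩ : ∃ j, v j ≠ w j := Function.ne_iff.mp hne
        obtain ⟨k₁, hk₁⟩ := hiv v j
        obtain ⟨k₂, hk₂⟩ := hiv w j
        rw [hvw] at hk₁
        have h9 : |(2 * π * ((v j : ℕ) : ℝ) / (M : ℝ) + ((iv w : ℝ) * hstep) * lam j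
              - 2 * π * (k₁ : ℝ))
            - (2 * π * ((w j : ℕ) : ℝ) / (M : ℝ) + ((iv w : ℝ) * hstep) * lam j
              - 2 * π * (k₂ : ℝ))| ≤ 3 * δ₁ + 3 * δ₁ :=
          le_trans (abs_sub _ _) (add_le_add hk₁ hk₂)
        set d : ℤ := ((v j : ℕ) : ℤ) - ((w j : ℕ) : ℤ) with hddef
        have hd0 : d ≠ 0 := by
          rw [hddef]
          intro hc
          apply hj
          have : ((v j : ℕ) : ℤ) = ((w j : ℕ) : ℤ) := by omega
          exact Fin.ext (by exact_mod_cast this)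
        have hdM : |d| < (M : ℤ) := by
          rw [hddef]
          have h1 : ((v j : ℕ) : ℤ) < M := by exact_mod_cast (v j).2
          have h2 : ((w j : ℕ) : ℤ) < M := by exact_mod_cast (w j).2
          have h3 : 0 ≤ ((v j : ℕ) : ℤ) := by positivity
          have h4 : 0 ≤ ((w j : ℕ) : ℤ) := by positivity
          rw [abs_lt]
          omega
        have hnd : d - (M : ℤ) * (k₁ - k₂) ≠ 0 := by
          intro hc
          have hdvd : (M : ℤ) ∣ d := ⟨k₁ - k₂, by omega⟩
          have habs : (M : ℤ) ∣ |d| := (dvd_abs _ _).mpr hdvd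
          have hpos : 0 < |d| := abs_pos.mpr hd0
          have := Int.le_of_dvd hpos habs
          omega
        have h1abs : (1 : ℝ) ≤ |((d - (M : ℤ) * (k₁ - k₂) : ℤ) : ℝ)| := by
          rw [← Int.cast_abs]
          exact_mod_cast Int.one_le_abs (by omega)
        have h10 : (2 * π * ((v j : ℕ) : ℝ) / (M : ℝ) + ((iv w : ℝ) * hstep) * lam j
              - 2 * π * (k₁ : ℝ))
            - (2 * π * ((w j : ℕ) : ℝ) / (M : ℝ) + ((iv w : ℝ) * hstep) * lam j
              - 2 * π * (k₂ : ℝ))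
            = (2 * π / (M : ℝ)) * ((d - (M : ℤ) * (k₁ - k₂) : ℤ) : ℝ) := by
          rw [hddef]
          push_cast
          field_simp
          ring
        rw [h10, abs_mul, _root_.abs_of_pos (by positivity : (0:ℝ) < 2 * π / (M:ℝ))] at h9
        have h11 : 2 * π / (M : ℝ) ≤ 2 * π / (M : ℝ) * |((d - (M : ℤ) * (k₁ - k₂) : ℤ) : ℝ)| := by
          nlinarith [h1abs]
        linarith
      calc M ^ n = Fintype.card (Fin n → Fin M) := by
            rw [Fintype.card_fun]
            simp
        _ ≤ Fintype.card (Fin (N + 1)) := Fintype.card_le_of_injective iv hinj2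
        _ = N + 1 := Fintype.card_fin _
    -- Step 4 : numerics
    have hNle : (N : ℝ) ≤ L / hstep + 1 := by
      rw [hNdef]
      exact le_of_lt (Nat.ceil_lt_add_one (by positivity))
    have hMn : ((M : ℝ)) ^ n ≤ (N : ℝ) + 1 := by exact_mod_cast hcount
    have hLlow : hstep * ((M : ℝ) ^ n - 2) ≤ L := by
      have h1 : (M : ℝ) ^ n - 2 ≤ L / hstep := by linarith
      calc hstep * ((M : ℝ) ^ n - 2) ≤ hstep * (L / hstep) :=
            mul_le_mul_of_nonneg_left h1 hsteppos.le
        _ = L := by field_simp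
    have hM4 : (4 : ℝ) ≤ Amin / (3 * ε) := by
      rw [le_div_iff₀ (by positivity)]
      nlinarith
    have hMR4 : (4 : ℝ) ≤ (M : ℝ) := le_trans hM4 hMge
    have hMn4 : (4 : ℝ) ≤ (M : ℝ) ^ n := le_trans hMR4 (le_self_pow₀ (by linarith) (by omega))
    have hhalf : ((M : ℝ) ^ n) / 2 ≤ (M : ℝ) ^ n - 2 := by linarith
    have hpow : (Amin / (3 * ε)) ^ n ≤ (M : ℝ) ^ n := pow_le_pow_left₀ (by positivity) hMge n
    have hfinal1 : hstep * (Amin / (3 * ε)) ^ n / 2 ≤ L := by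
      calc hstep * (Amin / (3 * ε)) ^ n / 2 ≤ hstep * ((M : ℝ) ^ n) / 2 := by gcongr
        _ = hstep * (((M : ℝ) ^ n) / 2) := by ring
        _ ≤ hstep * ((M : ℝ) ^ n - 2) := mul_le_mul_of_nonneg_left hhalf hsteppos.le
        _ ≤ L := hLlow
    have hC₁eq : C₁ * (1 / ε) ^ (n - 1) = hstep * (Amin / (3 * ε)) ^ n / 2 := by
      rw [hC₁def, hstepdef, hδ₁def]
      have hn' : n - 1 + 1 = n := Nat.succ_pred_eq_of_pos hn
      have hsplit : (Amin / (3 * ε)) ^ n = (Amin / 3) ^ n * (1 / ε) ^ n := by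
        rw [← mul_pow]
        congr 1
        field_simp
      rw [hsplit, ← hn', pow_succ (1 / ε) (n - 1)]
      field_simp
      ring_nf
      rw [show 1 + (n - 1) - 1 = n - 1 by omega]
    have hεinv : (0:ℝ) < 1 / ε := by positivity
    have hrpow : (1 / ε) ^ ((n : ℝ) - 1 - γ) = (1 / ε) ^ (n - 1) * ε ^ γ := by
      have hc : ((n : ℝ) - 1 - γ) = (((n - 1 : ℕ) : ℝ)) + (-γ) := by
        rw [Nat.cast_sub hn]
        push_cast
        ring
      rw [hc, Real.rpow_add hεinv, Real.rpow_natCast]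
      congr 1
      rw [Real.rpow_neg hεinv.le, one_div, Real.inv_rpow hε.le, inv_inv]
    have hεγ : ε ^ γ ≤ C₁ := by
      have h1 : ε ^ γ < (C₁ ^ ((1:ℝ) / γ)) ^ γ := Real.rpow_lt_rpow hε.le hεC hγ
      have h2 : (C₁ ^ ((1:ℝ) / γ)) ^ γ = C₁ := by
        rw [← Real.rpow_mul hC₁pos.le, one_div_mul_cancel (ne_of_gt hγ), Real.rpow_one]
      linarith
    calc (1 / ε) ^ ((n : ℝ) - 1 - γ) = (1 / ε) ^ (n - 1) * ε ^ γ := hrpow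
      _ ≤ (1 / ε) ^ (n - 1) * C₁ := mul_le_mul_of_nonneg_left hεγ (by positivity)
      _ = C₁ * (1 / ε) ^ (n - 1) := by ring
      _ = hstep * (Amin / (3 * ε)) ^ n / 2 := hC₁eq
      _ ≤ L := hfinal1
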